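/- arXiv:2512.14955 — 3 statements merged into one kernel-verified Lean document; each statement's English description precedes it below -/
import Mathlib

section
/- Let (w, γ) be a solution pair of the local problem (1.2) and let h > 0 satisfy h^{(p-1-2q)/q} = ‖w'‖₂² + h^{p-1}·‖w‖_{p+1}^{p+1}. Then the rescaled pair (h·w, h^{p-1}·γ) is a solution pair of the nonlocal problem (1.1), i.e. h·w is positive on (0,1), vanishes at 0 and 1, and satisfies -(‖(h·w)'‖₂² + ‖h·w‖_{p+1}^{p+1})^q·(h·w)''(x) + (h·w(x))^p = h^{p-1}·γ·(h·w(x)) for all x ∈ (0,1). -/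
open Real Filter Asymptotics Set

/-- `‖u'‖₂² = ∫₀¹ u'(x)² dx`. -/
noncomputable def gradSq (u : ℝ → ℝ) : ℝ := ∫ x in (0:ℝ)..1, (deriv u x) ^ 2

/-- `‖u‖_{p+1}^{p+1} = ∫₀¹ u(x)^{p+1} dx`. -/
noncomputable def pNorm (p : ℝ) (u : ℝ → ℝ) : ℝ := ∫ x in (0:ℝ)..1, (u x) ^ (p + 1)

/-- `‖u‖₂ = (∫₀¹ u(x)² dx)^{1/2}`. -/
noncomputable def l2norm (u : ℝ → ℝ) : ℝ := (∫ x in (0:ℝ)..1, (u x) ^ 2) ^ ((1:ℝ)/2)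

/-- The constant `C₁`. -/
noncomputable def C1 (p : ℝ) : ℝ :=
  (p + 3) * ∫ s in (0:ℝ)..1, Real.sqrt ((p-1)/(p+1) - s ^ 2 + (2/(p+1)) * s ^ (p+1))

/-- Solution pair of the nonlocal problem (1.1). -/
def IsNonlocalSol (p q : ℝ) (u : ℝ → ℝ) (lam : ℝ) : Prop :=
  ContDiffOn ℝ 2 u (Icc 0 1) ∧
  (∀ x ∈ Ioo (0:ℝ) 1, 0 < u x) ∧
  u 0 = 0 ∧ u 1 = 0 ∧
  ∀ x ∈ Ioo (0:ℝ) 1,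
    -((gradSq u + pNorm p u) ^ q) * deriv (deriv u) x + (u x) ^ p = lam * u x

/-- Solution pair of the local problem (1.2). -/
def IsLocalSol (p : ℝ) (w : ℝ → ℝ) (γ : ℝ) : Prop :=
  ContDiffOn ℝ 2 w (Icc 0 1) ∧
  (∀ x ∈ Ioo (0:ℝ) 1, 0 < w x) ∧
  w 0 = 0 ∧ w 1 = 0 ∧
  ∀ x ∈ Ioo (0:ℝ) 1, -deriv (deriv w) x + (w x) ^ p = γ * w x

theorem stmt8 (p q : ℝ) (hp : 1 < p) (hq0 : 0 < q) (hq1 : q < (p-1)/(p+1))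
    (w : ℝ → ℝ) (γ : ℝ) (hγ : 0 < γ) (hw : IsLocalSol p w γ)
    (h : ℝ) (hh : 0 < h)
    (heq : h ^ ((p - 1 - 2*q)/q) = gradSq w + h ^ (p-1) * pNorm p w) :
    IsNonlocalSol p q (fun x => h * w x) (h ^ (p-1) * γ) := by

  obtain ⟨hC, hpos, h0, h1, heqn⟩ := hw
  have hwnn : ∀ x ∈ Icc (0:ℝ) 1, 0 ≤ w x := by
    intro x hx
    rcases eq_or_lt_of_le hx.1 with h'|h'
    · simp [← h', h0]
    rcases eq_or_lt_of_le hx.2 with h''|h''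
    · simp [h'', h1]
    · exact (hpos x ⟨h', h''⟩).le
  have hd1 : deriv (fun x => h * w x) = fun x => h * deriv w x := by
    funext x; exact deriv_const_mul_field h
  have hd2 : ∀ x, deriv (deriv (fun x => h * w x)) x = h * deriv (deriv w) x := by
    intro x; rw [hd1]; exact deriv_const_mul_field h
  have hgrad : gradSq (fun x => h * w x) = h ^ 2 * gradSq w := by
    unfold gradSq
    rw [hd1, ← intervalIntegral.integral_const_mul]
    congr 1; funext x; ring
  have hpn : pNorm p (fun x => h * w x) = h ^ (p+1) * pNorm p w := by
    unfold pNorm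
    rw [← intervalIntegral.integral_const_mul]
    apply intervalIntegral.integral_congr
    intro x hx
    rw [Set.uIcc_of_le (by norm_num : (0:ℝ) ≤ 1)] at hx
    exact Real.mul_rpow hh.le (hwnn x hx)
  have hqne : q ≠ 0 := hq0.ne'
  have hcoef : (gradSq (fun x => h * w x) + pNorm p (fun x => h * w x)) ^ q
      = h ^ (p-1) := by
    have e1 : h ^ (p+1) = h ^ 2 * h ^ (p-1) := by
      rw [← Real.rpow_natCast h 2, ← Real.rpow_add hh]
      congr 1; push_cast; ring
    rw [hgrad, hpn, e1, mul_assoc, ← mul_add, ← heq,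
      ← Real.rpow_natCast h 2, ← Real.rpow_add hh, ← Real.rpow_mul hh.le]
    congr 1
    field_simp
    push_cast; ring
  refine ⟨contDiffOn_const.mul hC, fun x hx => mul_pos hh (hpos x hx), by simp [h0], by simp [h1], ?_⟩
  intro x hx
  rw [hcoef, hd2]
  have hmul : (h * w x) ^ p = h ^ p * (w x) ^ p :=
    Real.mul_rpow hh.le (hpos x hx).le
  have hp2 : h ^ p = h ^ (p-1) * h := by
    have e := Real.rpow_add hh (p-1) 1
    rw [Real.rpow_one, show p-1+1 = p by ring] at e
    exact e
  have hloc := heqn x hx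
  have : (w x) ^ p = γ * w x + deriv (deriv w) x := by linarith
  rw [hmul, this, hp2]
  ring
end

section
/- Let (u, λ) be a solution pair of the nonlocal problem (1.1), set β = (‖u'‖₂² + ‖u‖_{p+1}^{p+1})^q and h = β^{1/(p-1)}. Then (h^{-1}·u, λ/β) is a solution pair of the local problem (1.2), and h satisfies the scalar equation h^{(p-1-2q)/q} = ‖(h^{-1}·u)'‖₂² + h^{p-1}·‖h^{-1}·u‖_{p+1}^{p+1}. -/
open Real Filter Asymptotics Set

theorem stmt9 (p q : ℝ) (hp : 1 < p) (hq0 : 0 < q) (hq1 : q < (p-1)/(p+1))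
    (u : ℝ → ℝ) (lam : ℝ) (hlam : 0 < lam) (hu : IsNonlocalSol p q u lam)
    (β h : ℝ) (hβ : β = (gradSq u + pNorm p u) ^ q) (hhd : h = β ^ (1/(p-1))) :
    IsLocalSol p (fun x => h⁻¹ * u x) (lam / β) ∧
    h ^ ((p - 1 - 2*q)/q)
      = gradSq (fun x => h⁻¹ * u x) + h ^ (p-1) * pNorm p (fun x => h⁻¹ * u x) := by

  obtain ⟨hreg, hpos, h0, h1, heq⟩ := hu
  set s := gradSq u + pNorm p u with hs_def
  have hp1 : (0:ℝ) < p - 1 := by linarith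
  have hucont : ContinuousOn u (Icc 0 1) := hreg.continuousOn
  have hunn : ∀ x ∈ Icc (0:ℝ) 1, 0 ≤ u x := by
    intro x hx
    rcases eq_or_lt_of_le hx.1 with h'|h'
    · simp [← h', h0]
    rcases eq_or_lt_of_le hx.2 with h''|h''
    · simp [h'', h1]
    exact (hpos x ⟨h', h''⟩).le
  have hgs : 0 ≤ gradSq u :=
    intervalIntegral.integral_nonneg (by norm_num) (fun x _ => sq_nonneg _)
  have hpn : 0 < pNorm p u := by
    apply intervalIntegral.intervalIntegral_pos_of_pos_on
    · apply ContinuousOn.intervalIntegrable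
      rw [uIcc_of_le (by norm_num)]
      exact hucont.rpow_const (fun x hx => Or.inr (by linarith))
    · intro x hx; exact Real.rpow_pos_of_pos (hpos x hx) _
    · norm_num
  have hS : 0 < s := add_pos_of_nonneg_of_pos hgs hpn
  have hβpos : 0 < β := hβ ▸ Real.rpow_pos_of_pos hS q
  have hhpos : 0 < h := hhd ▸ Real.rpow_pos_of_pos hβpos _
  have hh : h = s ^ (q / (p-1)) := by
    rw [hhd, hβ, ← Real.rpow_mul hS.le]
    ring_nf
  have hhp1 : h ^ (p-1) = β := by
    rw [hh, ← Real.rpow_mul hS.le, div_mul_cancel₀ _ (by linarith : p - 1 ≠ 0), hβ]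
  have hDW : deriv (fun y => h⁻¹ * u y) = fun y => h⁻¹ * deriv u y :=
    funext fun y => deriv_const_mul_field _
  constructor
  · refine ⟨contDiffOn_const.mul hreg, fun x hx => mul_pos (inv_pos.2 hhpos) (hpos x hx),
      by simp [h0], by simp [h1], ?_⟩
    intro x hx
    have key := heq x hx
    rw [← hβ] at key
    have hD2 : deriv (deriv (fun y => h⁻¹ * u y)) x = h⁻¹ * deriv (deriv u) x := by
      rw [hDW, deriv_const_mul_field]
    rw [hD2]
    have hmul : (h⁻¹ * u x) ^ p = (h ^ p)⁻¹ * (u x) ^ p := by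
      rw [Real.mul_rpow (by positivity) (hpos x hx).le, Real.inv_rpow hhpos.le]
    have hhp : h ^ p = h * β := by
      rw [show p = 1 + (p-1) by ring, Real.rpow_add hhpos, Real.rpow_one, hhp1]
    rw [hmul, hhp]
    field_simp
    linear_combination key
  · have hgw : gradSq (fun x => h⁻¹ * u x) = h⁻¹ ^ 2 * gradSq u := by
      unfold gradSq
      rw [hDW]
      simp_rw [mul_pow]
      rw [intervalIntegral.integral_const_mul]
    have hpw : pNorm p (fun x => h⁻¹ * u x) = h⁻¹ ^ (p+1) * pNorm p u := by
      unfold pNorm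
      rw [← intervalIntegral.integral_const_mul]
      apply intervalIntegral.integral_congr
      intro x hx
      rw [uIcc_of_le (by norm_num)] at hx
      exact Real.mul_rpow (by positivity) (hunn x hx)
    rw [hgw, hpw]
    have h2 : h⁻¹ ^ 2 = h ^ (-2 : ℝ) := by
      rw [inv_pow, ← Real.rpow_natCast h 2, ← Real.rpow_neg hhpos.le]
      norm_num
    have hpe : h⁻¹ ^ (p+1) = h ^ (-(p+1)) := by
      rw [Real.inv_rpow hhpos.le, ← Real.rpow_neg hhpos.le]
    rw [h2, hpe, ← mul_assoc, ← Real.rpow_add hhpos]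
    have : p - 1 + -(p + 1) = (-2 : ℝ) := by ring
    rw [this, ← mul_add]
    have hsum : gradSq u + pNorm p u = s := rfl
    rw [hsum, hh, ← Real.rpow_mul hS.le, ← Real.rpow_mul hS.le,
      ← Real.rpow_add_one hS.ne']
    congr 1
    field_simp
    ring
end

section
/- Let p = 3. Suppose that for each ξ > 0 a function w_ξ and a number γ(ξ) > 0 are given such that (w_ξ, γ(ξ)) is a solution pair of the local problem (1.2) with ‖w_ξ‖₂ = ξ, and for ξ > 0 define h(ξ) > 0 by h(ξ)² = (‖w_ξ‖₄⁴ + √(‖w_ξ‖₄⁸ + 4·‖w_ξ'‖₂²))/2, where ‖w_ξ‖₄⁴ = ∫₀¹ w_ξ(x)⁴ dx. Then, as ξ → ∞, h(ξ)² = ξ⁴ + (2/3)·C₁·ξ³ + o(ξ³), where C₁ = 6·∫₀¹ √(1/2 - s² + s⁴/2) ds. -/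
open Real Filter Asymptotics Set

/-- `C₁` for `p = 3`. -/
noncomputable def C1three : ℝ := 6 * ∫ s in (0:ℝ)..1, Real.sqrt (1/2 - s^2 + s^4/2)

section helpers
open intervalIntegral MeasureTheory

/-- generic FTC on a subinterval of [0,1] with interior derivative -/
lemma my_ftc {F f : ℝ → ℝ} {a b : ℝ} (hab : a ≤ b)
    (hF : ContinuousOn F (Icc a b)) (hf : ContinuousOn f (Icc a b))
    (hd : ∀ x ∈ Ioo a b, HasDerivAt F (f x) x) :
    ∫ x in a..b, f x = F b - F a := by
  apply intervalIntegral.integral_eq_sub_of_hasDeriv_right_of_le hab hF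
  · exact fun x hx => (hd x hx).hasDerivWithinAt
  · exact (hf.mono (by simp [Icc_subset_Icc, hab, uIcc_of_le])).intervalIntegrable

lemma sqrt_add_le' {a b : ℝ} (ha : 0 ≤ a) (hb : 0 ≤ b) :
    Real.sqrt (a + b) ≤ Real.sqrt a + Real.sqrt b := by
  rw [show a + b = a + b by ring]
  have h : a + b ≤ (Real.sqrt a + Real.sqrt b) ^ 2 := by
    have := Real.sq_sqrt ha; have := Real.sq_sqrt hb
    have := Real.sqrt_nonneg a; have := Real.sqrt_nonneg b
    nlinarith [mul_nonneg (Real.sqrt_nonneg a) (Real.sqrt_nonneg b)]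
  calc Real.sqrt (a + b) ≤ Real.sqrt ((Real.sqrt a + Real.sqrt b)^2) := Real.sqrt_le_sqrt h
    _ = Real.sqrt a + Real.sqrt b := Real.sqrt_sq (by positivity)

section core
variable {u v : ℝ → ℝ} {c : ℝ}

lemma unonneg (hpos : ∀ x ∈ Ioo (0:ℝ) 1, 0 < u x) (h0 : u 0 = 0) (h1 : u 1 = 0) :
    ∀ x ∈ Icc (0:ℝ) 1, 0 ≤ u x := by
  intro x hx
  rcases eq_or_lt_of_le hx.1 with h | h
  · simp [← h, h0]
  rcases eq_or_lt_of_le hx.2 with h' | h'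
  · simp [h', h1]
  exact (hpos x ⟨h, h'⟩).le

/-- conservation law: `2 v² + r² = (c - u²)²` on `Icc 0 1`, where `r = c - M²`,
`x₀` max point with `v x₀ = 0`. -/
lemma conservation
    (hu : ContinuousOn u (Icc 0 1)) (hv : ContinuousOn v (Icc 0 1))
    (hud : ∀ x ∈ Ioo (0:ℝ) 1, HasDerivAt u (v x) x)
    (hvd : ∀ x ∈ Ioo (0:ℝ) 1, HasDerivAt v (u x ^ 3 - c * u x) x)
    {x₀ : ℝ} (hx₀ : x₀ ∈ Ioo (0:ℝ) 1) (hvx₀ : v x₀ = 0) :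
    ∀ x ∈ Icc (0:ℝ) 1,
      2 * v x ^ 2 + (c - u x₀ ^ 2) ^ 2 = (c - u x ^ 2) ^ 2 := by
  set F : ℝ → ℝ := fun x => v x ^ 2 + c * u x ^ 2 - u x ^ 4 / 2 with hF
  have hFd : ∀ x ∈ Ioo (0:ℝ) 1, HasDerivAt F 0 x := by
    intro x hx
    have h1 : HasDerivAt (fun y => v y ^ 2) (2 * v x * (u x ^ 3 - c * u x)) x := by
      simpa using ((hvd x hx).fun_pow 2)
    have h2 : HasDerivAt (fun y => c * u y ^ 2) (c * (2 * u x * v x)) x := by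
      simpa using (((hud x hx).pow 2).const_mul c)
    have h3 : HasDerivAt (fun y => u y ^ 4 / 2) ((4 * u x ^ 3 * v x) / 2) x := by
      simpa using (((hud x hx).pow 4).div_const 2)
    have := (h1.fun_add h2).fun_sub h3
    exact this.congr_deriv (by ring)
  have hFc : ContinuousOn F (Icc 0 1) := by
    apply ContinuousOn.sub (ContinuousOn.add (hv.pow 2) ((hu.pow 2).const_smul c |>.congr ?_))
      ((hu.pow 4).div_const 2)
    intro x hx; simp [smul_eq_mul]
  -- F constant on Ioo
  have hconst : ∀ x ∈ Ioo (0:ℝ) 1, F x = F x₀ := by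
    intro x hx
    rcases le_total x x₀ with hle | hle
    · have := constant_of_has_deriv_right_zero
        (f := F) (a := x) (b := x₀)
        (hFc.mono (Icc_subset_Icc hx.1.le hx₀.2.le))
        (fun y hy => (hFd y ⟨lt_of_lt_of_le hx.1 hy.1, hy.2.trans_le hx₀.2.le⟩).hasDerivWithinAt)
      exact ((this x₀ ⟨hle, le_refl _⟩)).symm ▸ rfl
    · have := constant_of_has_deriv_right_zero
        (f := F) (a := x₀) (b := x)
        (hFc.mono (Icc_subset_Icc hx₀.1.le hx.2.le))
        (fun y hy => (hFd y ⟨lt_of_lt_of_le hx₀.1 hy.1, hy.2.trans_le hx.2.le⟩).hasDerivWithinAt)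
      exact this x ⟨hle, le_refl _⟩
  -- extend to Icc by continuity
  have hclos : ∀ x ∈ Icc (0:ℝ) 1, F x = F x₀ := by
    have : EqOn F (fun _ => F x₀) (Icc 0 1) := by
      apply Set.EqOn.of_subset_closure (s := Ioo (0:ℝ) 1) hconst hFc
        continuousOn_const Ioo_subset_Icc_self ?_
      rw [closure_Ioo (by norm_num : (0:ℝ) ≠ 1)]
    exact this
  intro x hx
  have h1 := hclos x hx
  have h2 : F x₀ = c * u x₀ ^ 2 - u x₀ ^ 4 / 2 := by simp [hF, hvx₀]
  simp only [hF] at h1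
  nlinarith [h1, h2]

end core

section core2
variable {u v : ℝ → ℝ} {c : ℝ}

lemma maxpt (hu : ContinuousOn u (Icc 0 1))
    (hud : ∀ x ∈ Ioo (0:ℝ) 1, HasDerivAt u (v x) x)
    (hpos : ∀ x ∈ Ioo (0:ℝ) 1, 0 < u x) (h0 : u 0 = 0) (h1 : u 1 = 0) :
    ∃ x₀ ∈ Ioo (0:ℝ) 1, IsMaxOn u (Icc 0 1) x₀ ∧ v x₀ = 0 ∧ 0 < u x₀ := by
  obtain ⟨x₀, hx₀m, hmax⟩ := isCompact_Icc.exists_isMaxOn (by norm_num : (Icc (0:ℝ) 1).Nonempty)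
    hu
  have hM : 0 < u x₀ := lt_of_lt_of_le (hpos (1/2) (by norm_num)) (hmax (by norm_num))
  have hx₀ : x₀ ∈ Ioo (0:ℝ) 1 := by
    constructor
    · rcases eq_or_lt_of_le hx₀m.1 with h | h
      · exfalso; rw [← h, h0] at hM; exact lt_irrefl 0 hM
      · exact h
    · rcases eq_or_lt_of_le hx₀m.2 with h | h
      · exfalso; rw [h, h1] at hM; exact lt_irrefl 0 hM
      · exact h
  have hloc : IsLocalMax u x₀ := hmax.isLocalMax (Icc_mem_nhds hx₀.1 hx₀.2)
  exact ⟨x₀, hx₀, hmax, hloc.hasDerivAt_eq_zero (hud x₀ hx₀), hM⟩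

lemma qpos (hu : ContinuousOn u (Icc 0 1)) (hv : ContinuousOn v (Icc 0 1))
    (hud : ∀ x ∈ Ioo (0:ℝ) 1, HasDerivAt u (v x) x)
    (hvd : ∀ x ∈ Ioo (0:ℝ) 1, HasDerivAt v (u x ^ 3 - c * u x) x)
    (hpos : ∀ x ∈ Ioo (0:ℝ) 1, 0 < u x) (h0 : u 0 = 0) (h1 : u 1 = 0) (hc : 0 < c)
    {x₀ : ℝ} (hx₀ : x₀ ∈ Ioo (0:ℝ) 1) (hmax : IsMaxOn u (Icc 0 1) x₀) (hv0 : v x₀ = 0) :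
    0 < c - u x₀ ^ 2 ∧
      ∀ x ∈ Icc (0:ℝ) 1, 0 < c - u x ^ 2 ∧
        c - u x ^ 2 = Real.sqrt (2 * v x ^ 2 + (c - u x₀ ^ 2) ^ 2) := by
  have cons := conservation hu hv hud hvd hx₀ hv0
  set M := u x₀ with hM
  set r := c - M ^ 2 with hr
  have hMpos : 0 < M := lt_of_lt_of_le (hpos (1/2) (by norm_num)) (hmax (by norm_num))
  have hun := unonneg hpos h0 h1
  -- step (a): r ≠ 0
  have hrne : r ≠ 0 := by
    intro hr0
    set C := 2 * Real.sqrt 2 * M with hC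
    have hCpos : 0 < C := by positivity
    set φ : ℝ → ℝ := fun x => (c - u x ^ 2) ^ 2 with hφ
    have hφd : ∀ x ∈ Ioo (0:ℝ) 1,
        HasDerivAt φ (2 * (c - u x ^ 2) * (-(2 * u x * v x))) x := by
      intro x hx
      have h1 : HasDerivAt (fun y => c - u y ^ 2) (-(2 * u x * v x)) x := by
        simpa using (((hud x hx).pow 2).const_sub c)
      exact (h1.fun_pow 2).congr_deriv (by ring)
    have hbound : ∀ x ∈ Ioo (0:ℝ) 1,
        2 * (c - u x ^ 2) * (-(2 * u x * v x)) ≤ C * φ x := by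
      intro x hx
      have hcons := cons x (Ioo_subset_Icc_self hx)
      rw [hr0] at hcons
      have hvv : 2 * v x ^ 2 = (c - u x ^ 2) ^ 2 := by
        simpa using hcons
      have hux : 0 ≤ u x := hun x (Ioo_subset_Icc_self hx)
      have huM : u x ≤ M := hmax (Ioo_subset_Icc_self hx)
      have h2 : Real.sqrt 2 * |v x| = |c - u x ^ 2| := by
        rw [← Real.sqrt_sq_eq_abs (v x), ← Real.sqrt_sq_eq_abs,
          ← Real.sqrt_mul (by norm_num : (0:ℝ) ≤ 2)]
        rw [hvv]
      have hφnn : (0:ℝ) ≤ φ x := sq_nonneg _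
      calc 2 * (c - u x ^ 2) * (-(2 * u x * v x))
          = 4 * u x * ((c - u x ^ 2) * (- v x)) := by ring
        _ ≤ 4 * u x * (|c - u x ^ 2| * |v x|) := by
            apply mul_le_mul_of_nonneg_left _ (by linarith)
            calc (c - u x ^ 2) * (- v x) ≤ |(c - u x ^ 2) * (- v x)| := le_abs_self _
              _ = |c - u x ^ 2| * |v x| := by rw [abs_mul, abs_neg]
        _ = 4 * u x * (Real.sqrt 2 * (|v x| * |v x|)) := by rw [← h2]; ring
        _ = 2 * Real.sqrt 2 * u x * (2 * v x ^ 2) := by rw [abs_mul_abs_self]; ring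
        _ = 2 * Real.sqrt 2 * u x * φ x := by
            show _ = 2 * Real.sqrt 2 * u x * (c - u x ^ 2) ^ 2
            rw [← hvv]
        _ ≤ C * φ x := by
            rw [hC]
            nlinarith [mul_nonneg (mul_nonneg (sub_nonneg.2 huM) (Real.sqrt_nonneg 2)) hφnn]
    set ψ : ℝ → ℝ := fun x => φ x * Real.exp (-C * x) with hψ
    have hψanti : AntitoneOn ψ (Icc x₀ 1) := by
      apply antitoneOn_of_deriv_nonpos (convex_Icc x₀ 1)
      · apply ContinuousOn.mul
        · exact (continuousOn_const.sub ((hu.mono (Icc_subset_Icc hx₀.1.le le_rfl)).pow 2)).pow 2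
        · exact (Real.continuous_exp.comp (continuous_const.mul continuous_id)).continuousOn
      · rw [interior_Icc]
        intro x hx
        have hx' : x ∈ Ioo (0:ℝ) 1 := ⟨hx₀.1.trans hx.1, hx.2⟩
        have hlin : HasDerivAt (fun y : ℝ => -C * y) (-C) x := by
          simpa using (hasDerivAt_id x).const_mul (-C)
        exact ((hφd x hx').mul hlin.exp).differentiableAt.differentiableWithinAt
      · rw [interior_Icc]
        intro x hx
        have hx' : x ∈ Ioo (0:ℝ) 1 := ⟨hx₀.1.trans hx.1, hx.2⟩
        have hd : HasDerivAt ψ ((2 * (c - u x ^ 2) * (-(2 * u x * v x)) - C * φ x) *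
            Real.exp (-C * x)) x := by
          have hlin : HasDerivAt (fun y : ℝ => -C * y) (-C) x := by
            simpa using (hasDerivAt_id x).const_mul (-C)
          have := (hφd x hx').fun_mul hlin.exp
          exact this.congr_deriv (by ring)
        rw [hd.deriv]
        have := hbound x hx'
        have hexp : 0 < Real.exp (-C * x) := Real.exp_pos _
        nlinarith
    have h1' : ψ 1 ≤ ψ x₀ := hψanti (left_mem_Icc.2 hx₀.2.le) (right_mem_Icc.2 hx₀.2.le) hx₀.2.le
    have hψx₀ : ψ x₀ = 0 := by
      have hMc : c - M ^ 2 = 0 := hr ▸ hr0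
      have : φ x₀ = 0 := by
        show (c - u x₀ ^ 2) ^ 2 = 0
        rw [← hM] at *
        rw [hMc]; ring
      simp [hψ, this]
    have hψ1 : ψ 1 = c ^ 2 * Real.exp (-C * 1) := by simp [hψ, hφ, h1]
    rw [hψx₀, hψ1] at h1'
    nlinarith [mul_pos (pow_pos hc 2) (Real.exp_pos (-C * 1))]
  -- nonvanishing of q := c - u^2
  have hqsq : ∀ x ∈ Icc (0:ℝ) 1, r ^ 2 ≤ (c - u x ^ 2) ^ 2 := by
    intro x hx; nlinarith [cons x hx, sq_nonneg (v x)]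
  have hq : ∀ x ∈ Icc (0:ℝ) 1, 0 < c - u x ^ 2 := by
    intro y hy
    by_contra hle
    push_neg at hle
    have hy0 : c - u y ^ 2 < 0 := by
      rcases eq_or_lt_of_le hle with h | h
      · exfalso; have := hqsq y hy
        nlinarith [sq_pos_of_ne_zero hrne]
      · exact h
    have hcont : ContinuousOn (fun x => c - u x ^ 2) (Icc 0 y) :=
      continuousOn_const.sub ((hu.mono (Icc_subset_Icc le_rfl hy.2)).pow 2)
    have := intermediate_value_Icc' hy.1 hcont
    have h0mem : (0:ℝ) ∈ Icc (c - u y ^ 2) (c - u 0 ^ 2) := by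
      constructor
      · exact hy0.le
      · rw [h0]; simpa using hc.le
    obtain ⟨z, hz, hz0⟩ := this h0mem
    have h2 := hqsq z (Icc_subset_Icc le_rfl hy.2 hz)
    simp only at hz0
    rw [hz0] at h2
    nlinarith [sq_pos_of_ne_zero hrne]
  refine ⟨hq x₀ (Ioo_subset_Icc_self hx₀), fun x hx => ⟨hq x hx, ?_⟩⟩
  rw [cons x hx, Real.sqrt_sq (hq x hx).le]

end core2

section core3
variable {u v : ℝ → ℝ} {c : ℝ}

lemma intabs (hu : ContinuousOn u (Icc 0 1)) (hv : ContinuousOn v (Icc 0 1))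
    (hud : ∀ x ∈ Ioo (0:ℝ) 1, HasDerivAt u (v x) x)
    (hvd : ∀ x ∈ Ioo (0:ℝ) 1, HasDerivAt v (u x ^ 3 - c * u x) x)
    (hpos : ∀ x ∈ Ioo (0:ℝ) 1, 0 < u x) (h0 : u 0 = 0) (h1 : u 1 = 0) (hc : 0 < c)
    {x₀ : ℝ} (hx₀ : x₀ ∈ Ioo (0:ℝ) 1) (hmax : IsMaxOn u (Icc 0 1) x₀) (hv0 : v x₀ = 0) :
    ∫ x in (0:ℝ)..1, |v x| = 2 * u x₀ := by
  obtain ⟨hrpos, hpt⟩ := qpos hu hv hud hvd hpos h0 h1 hc hx₀ hmax hv0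
  have cons := conservation hu hv hud hvd hx₀ hv0
  set M := u x₀ with hM
  have hMpos : 0 < M := lt_of_lt_of_le (hpos (1/2) (by norm_num)) (hmax (by norm_num))
  have hun := unonneg hpos h0 h1
  -- zeros of v are max points
  have hzero : ∀ x ∈ Icc (0:ℝ) 1, v x = 0 → u x = M := by
    intro x hx hvx
    have h1' := cons x hx
    rw [hvx] at h1'
    have h2 : (c - u x ^ 2) ^ 2 = (c - M ^ 2) ^ 2 := by linarith
    have h3 : 0 < c - u x ^ 2 := (hpt x hx).1
    have h4 : c - u x ^ 2 = c - M ^ 2 := by nlinarith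
    have h5 : u x ^ 2 = M ^ 2 := by linarith
    have h6 : 0 ≤ u x := hun x hx
    nlinarith
  -- uniqueness of max point
  have huniq : ∀ x ∈ Icc (0:ℝ) 1, u x = M → x = x₀ := by
    intro x hx hux
    by_contra hne
    have hxIoo : x ∈ Ioo (0:ℝ) 1 := by
      constructor
      · rcases eq_or_lt_of_le hx.1 with h | h
        · exfalso; rw [← h, h0] at hux; rw [← hux] at hMpos; exact lt_irrefl 0 hMpos
        · exact h
      · rcases eq_or_lt_of_le hx.2 with h | h
        · exfalso; rw [h, h1] at hux; rw [← hux] at hMpos; exact lt_irrefl 0 hMpos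
        · exact h
    set a := min x x₀ with ha
    set b := max x x₀ with hb
    have hab : a < b := by
      rcases lt_or_gt_of_ne hne with h | h
      · rw [ha, hb, min_eq_left h.le, max_eq_right h.le]; exact h
      · rw [ha, hb, min_eq_right h.le, max_eq_left h.le]; exact h
    have haIoo : a ∈ Ioo (0:ℝ) 1 := by
      rcases le_total x x₀ with h | h
      · rw [ha, min_eq_left h]; exact hxIoo
      · rw [ha, min_eq_right h]; exact hx₀
    have hbIoo : b ∈ Ioo (0:ℝ) 1 := by
      rcases le_total x x₀ with h | h
      · rw [hb, max_eq_right h]; exact hx₀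
      · rw [hb, max_eq_left h]; exact hxIoo
    have hua : u a = M := by
      rcases le_total x x₀ with h | h
      · rw [ha, min_eq_left h]; exact hux
      · rw [ha, min_eq_right h]
    have hub : u b = M := by
      rcases le_total x x₀ with h | h
      · rw [hb, max_eq_right h]
      · rw [hb, max_eq_left h]; exact hux
    have hsubIoo : Ioo a b ⊆ Ioo (0:ℝ) 1 :=
      fun z hz => ⟨haIoo.1.trans hz.1, hz.2.trans hbIoo.2⟩
    have hsubIcc : Icc a b ⊆ Icc (0:ℝ) 1 := Icc_subset_Icc haIoo.1.le hbIoo.2.le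
    -- u ≡ M on Ioo a b
    have hconst : ∀ z ∈ Ioo a b, u z = M := by
      intro z hz
      by_contra hne'
      have hlt : u z < M := lt_of_le_of_ne (hmax (hsubIcc (Ioo_subset_Icc_self hz))) hne'
      obtain ⟨m, hm, hmin⟩ := isCompact_Icc.exists_isMinOn (nonempty_Icc.2 hab.le)
        (hu.mono hsubIcc)
      have hmlt : u m < M := lt_of_le_of_lt (hmin (Ioo_subset_Icc_self hz)) hlt
      have hmIoo : m ∈ Ioo a b := by
        constructor
        · rcases eq_or_lt_of_le hm.1 with h | h
          · exfalso; rw [← h, hua] at hmlt; exact lt_irrefl M hmlt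
          · exact h
        · rcases eq_or_lt_of_le hm.2 with h | h
          · exfalso; rw [h, hub] at hmlt; exact lt_irrefl M hmlt
          · exact h
      have hloc : IsLocalMin u m := hmin.isLocalMin (Icc_mem_nhds hmIoo.1 hmIoo.2)
      have hvm : v m = 0 := hloc.hasDerivAt_eq_zero (hud m (hsubIoo hmIoo))
      have := hzero m (hsubIcc (Ioo_subset_Icc_self hmIoo)) hvm
      rw [this] at hmlt; exact lt_irrefl M hmlt
    -- then v ≡ 0 on Ioo a b, and ODE forces M^2 = c, contradiction with r > 0
    have hvconst : ∀ z ∈ Ioo a b, v z = 0 := by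
      intro z hz
      have hd1 : HasDerivAt u (v z) z := hud z (hsubIoo hz)
      have hd2 : HasDerivAt u 0 z := by
        have : (fun _ : ℝ => M) =ᶠ[nhds z] u := by
          filter_upwards [Ioo_mem_nhds hz.1 hz.2] with y hy
          exact (hconst y hy).symm
        exact (hasDerivAt_const z M).congr_of_eventuallyEq this.symm
      exact hd1.unique hd2
    set z := (a + b) / 2 with hz
    have hzIoo : z ∈ Ioo a b := ⟨by rw [hz]; linarith, by rw [hz]; linarith⟩
    have hd1 : HasDerivAt v (u z ^ 3 - c * u z) z := hvd z (hsubIoo hzIoo)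
    have hd2 : HasDerivAt v 0 z := by
      have : (fun _ : ℝ => (0:ℝ)) =ᶠ[nhds z] v := by
        filter_upwards [Ioo_mem_nhds hzIoo.1 hzIoo.2] with y hy
        exact (hvconst y hy).symm
      exact (hasDerivAt_const z (0:ℝ)).congr_of_eventuallyEq this.symm
    have hODE : u z ^ 3 - c * u z = 0 := hd1.unique hd2
    have huz : u z = M := hconst z hzIoo
    rw [huz] at hODE
    have : M ^ 2 = c := by
      have hM3 : M * (M ^ 2 - c) = 0 := by ring_nf; ring_nf at hODE; linarith
      rcases mul_eq_zero.1 hM3 with h | h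
      · exfalso; rw [h] at hMpos; exact lt_irrefl 0 hMpos
      · linarith
    rw [this] at hrpos
    exact lt_irrefl 0 (by linarith)
  -- sign of v on (0, x₀)
  have hvne : ∀ x ∈ Ioo (0:ℝ) 1, x ≠ x₀ → v x ≠ 0 := by
    intro x hx hne hvx
    exact hne (huniq x (Ioo_subset_Icc_self hx) (hzero x (Ioo_subset_Icc_self hx) hvx))
  -- generic: if v takes a negative and a positive value in an x₀-free subinterval, contradiction
  have hIVT : ∀ aa bb : ℝ, aa ∈ Ioo (0:ℝ) 1 → bb ∈ Ioo (0:ℝ) 1 → aa ≠ x₀ → bb ≠ x₀ →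
      (∀ t ∈ uIcc aa bb, t ≠ x₀) → v aa < 0 → 0 < v bb → False := by
    intro aa bb haa hbb hane hbne hfree hva hvb
    have hsubu : uIcc aa bb ⊆ Ioo (0:ℝ) 1 := by
      intro t ht
      rw [Set.mem_uIcc] at ht
      rcases ht with ⟨h1, h2⟩ | ⟨h1, h2⟩
      · exact ⟨lt_of_lt_of_le haa.1 h1, lt_of_le_of_lt h2 hbb.2⟩
      · exact ⟨lt_of_lt_of_le hbb.1 h1, lt_of_le_of_lt h2 haa.2⟩
    have hcont : ContinuousOn v (uIcc aa bb) := hv.mono (hsubu.trans Ioo_subset_Icc_self)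
    have h0mem : (0:ℝ) ∈ uIcc (v aa) (v bb) := by
      rw [Set.mem_uIcc]; left; exact ⟨hva.le, hvb.le⟩
    obtain ⟨zz, hzz, hzz0⟩ := intermediate_value_uIcc hcont h0mem
    exact hvne zz (hsubu hzz) (hfree zz hzz) hzz0
  have hsign1 : ∀ x ∈ Ioo 0 x₀, 0 ≤ v x := by
    by_contra hcon
    push_neg at hcon
    obtain ⟨aa, haa, hva⟩ := hcon
    have hsub : Ioo (0:ℝ) x₀ ⊆ Ioo (0:ℝ) 1 := fun y hy => ⟨hy.1, hy.2.trans hx₀.2⟩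
    have hall : ∀ x ∈ Ioo (0:ℝ) x₀, v x ≤ 0 := by
      intro b hb
      by_contra hvb
      push_neg at hvb
      refine hIVT aa b (hsub haa) (hsub hb) (ne_of_lt haa.2) (ne_of_lt hb.2) ?_ hva hvb
      intro t ht
      rw [Set.mem_uIcc] at ht
      rcases ht with ⟨h1, h2⟩ | ⟨h1, h2⟩
      · exact ne_of_lt (lt_of_le_of_lt h2 hb.2)
      · exact ne_of_lt (lt_of_le_of_lt h2 haa.2)
    have hanti : AntitoneOn u (Icc 0 x₀) := by
      apply antitoneOn_of_deriv_nonpos (convex_Icc 0 x₀)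
        (hu.mono (Icc_subset_Icc le_rfl hx₀.2.le))
      · rw [interior_Icc]
        exact fun x hx => ((hud x (hsub hx)).differentiableAt).differentiableWithinAt
      · rw [interior_Icc]
        intro x hx
        rw [(hud x (hsub hx)).deriv]
        exact hall x hx
    have hle := hanti (left_mem_Icc.2 hx₀.1.le) (right_mem_Icc.2 hx₀.1.le) hx₀.1.le
    rw [h0] at hle
    exact absurd (lt_of_lt_of_le hMpos hle) (lt_irrefl 0)
  have hsign2 : ∀ x ∈ Ioo x₀ 1, v x ≤ 0 := by
    by_contra hcon
    push_neg at hcon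
    obtain ⟨bb, hbb, hvb⟩ := hcon
    have hsub : Ioo x₀ (1:ℝ) ⊆ Ioo (0:ℝ) 1 := fun y hy => ⟨hx₀.1.trans hy.1, hy.2⟩
    have hall : ∀ x ∈ Ioo x₀ (1:ℝ), 0 ≤ v x := by
      intro a ha
      by_contra hva
      push_neg at hva
      refine hIVT a bb (hsub ha) (hsub hbb) (ne_of_gt ha.1) (ne_of_gt hbb.1) ?_ hva hvb
      intro t ht
      rw [Set.mem_uIcc] at ht
      rcases ht with ⟨h1, h2⟩ | ⟨h1, h2⟩
      · exact ne_of_gt (lt_of_lt_of_le ha.1 h1)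
      · exact ne_of_gt (lt_of_lt_of_le hbb.1 h1)
    have hmono : MonotoneOn u (Icc x₀ 1) := by
      apply monotoneOn_of_deriv_nonneg (convex_Icc x₀ 1)
        (hu.mono (Icc_subset_Icc hx₀.1.le le_rfl))
      · rw [interior_Icc]
        exact fun x hx => ((hud x (hsub hx)).differentiableAt).differentiableWithinAt
      · rw [interior_Icc]
        intro x hx
        rw [(hud x (hsub hx)).deriv]
        exact hall x hx
    have hle := hmono (left_mem_Icc.2 hx₀.2.le) (right_mem_Icc.2 hx₀.2.le) hx₀.2.le
    rw [h1] at hle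
    exact absurd (lt_of_lt_of_le hMpos hle) (lt_irrefl 0)
  -- now compute the integral
  have hvInt1 : ContinuousOn v (Icc 0 x₀) := hv.mono (Icc_subset_Icc le_rfl hx₀.2.le)
  have hvInt2 : ContinuousOn v (Icc x₀ 1) := hv.mono (Icc_subset_Icc hx₀.1.le le_rfl)
  have hae : ∀ᵐ x : ℝ, x ≠ x₀ := by
    have hset : {x : ℝ | ¬ x ≠ x₀} = {x₀} := by ext t; simp
    rw [MeasureTheory.ae_iff, hset]
    exact Real.volume_singleton
  have hint1 : ∫ x in (0:ℝ)..x₀, |v x| = M := by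
    have hcongr : ∫ x in (0:ℝ)..x₀, |v x| = ∫ x in (0:ℝ)..x₀, v x := by
      apply intervalIntegral.integral_congr_ae
      filter_upwards [hae] with x hx hmem
      rw [Set.uIoc_of_le hx₀.1.le] at hmem
      exact abs_of_nonneg (hsign1 x ⟨hmem.1, lt_of_le_of_ne hmem.2 hx⟩)
    rw [hcongr, my_ftc hx₀.1.le (hu.mono (Icc_subset_Icc le_rfl hx₀.2.le)) hvInt1
      (fun x hx => hud x ⟨hx.1, hx.2.trans hx₀.2⟩), h0, ← hM, sub_zero]
  have hae1 : ∀ᵐ x : ℝ, x ≠ (1:ℝ) := by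
    have hset : {x : ℝ | ¬ x ≠ (1:ℝ)} = {(1:ℝ)} := by ext t; simp
    rw [MeasureTheory.ae_iff, hset]
    exact Real.volume_singleton
  have hint2 : ∫ x in x₀..(1:ℝ), |v x| = M := by
    have hcongr : ∫ x in x₀..(1:ℝ), |v x| = ∫ x in x₀..(1:ℝ), -v x := by
      apply intervalIntegral.integral_congr_ae
      filter_upwards [hae1] with x hx hmem
      rw [Set.uIoc_of_le hx₀.2.le] at hmem
      exact abs_of_nonpos (hsign2 x ⟨hmem.1, lt_of_le_of_ne hmem.2 hx⟩)
    rw [hcongr]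
    have := my_ftc hx₀.2.le (hu.mono (Icc_subset_Icc hx₀.1.le le_rfl)) hvInt2
      (fun x hx => hud x ⟨hx₀.1.trans hx.1, hx.2⟩)
    rw [intervalIntegral.integral_neg, this, h1, ← hM]
    ring
  have hadd : ∫ x in (0:ℝ)..1, |v x| =
      (∫ x in (0:ℝ)..x₀, |v x|) + ∫ x in x₀..(1:ℝ), |v x| := by
    rw [intervalIntegral.integral_add_adjacent_intervals]
    · exact (hvInt1.abs.intervalIntegrable_of_Icc hx₀.1.le)
    · exact (hvInt2.abs.intervalIntegrable_of_Icc hx₀.2.le)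
  rw [hadd, hint1, hint2]; ring

end core3

section core4
variable {u v : ℝ → ℝ} {c : ℝ}

lemma eigen_bound (hu : ContinuousOn u (Icc 0 1)) (hv : ContinuousOn v (Icc 0 1))
    (hud : ∀ x ∈ Ioo (0:ℝ) 1, HasDerivAt u (v x) x)
    (hvd : ∀ x ∈ Ioo (0:ℝ) 1, HasDerivAt v (u x ^ 3 - c * u x) x)
    (hpos : ∀ x ∈ Ioo (0:ℝ) 1, 0 < u x) (h0 : u 0 = 0) (h1 : u 1 = 0) (hc : 0 < c)
    {x₀ : ℝ} (hx₀ : x₀ ∈ Ioo (0:ℝ) 1) (hmax : IsMaxOn u (Icc 0 1) x₀) (hv0 : v x₀ = 0) :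
    c - u x₀ ^ 2 ≤ π ^ 2 := by
  obtain ⟨hrpos, hpt⟩ := qpos hu hv hud hvd hpos h0 h1 hc hx₀ hmax hv0
  set M := u x₀ with hM
  set r := c - M ^ 2 with hr
  have hun := unonneg hpos h0 h1
  have hsin : Continuous fun x : ℝ => Real.sin (π * x) :=
    Real.continuous_sin.comp (continuous_const.mul continuous_id)
  have hJpos : 0 < ∫ x in (0:ℝ)..1, u x * Real.sin (π * x) := by
    apply intervalIntegral.intervalIntegral_pos_of_pos_on
    · exact (hu.mul hsin.continuousOn).intervalIntegrable_of_Icc zero_le_one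
    · intro x hx
      apply mul_pos (hpos x hx)
      apply Real.sin_pos_of_pos_of_lt_pi
      · exact mul_pos Real.pi_pos hx.1
      · nlinarith [Real.pi_pos, hx.2]
    · exact zero_lt_one
  set J := ∫ x in (0:ℝ)..1, u x * Real.sin (π * x) with hJ
  -- FTC identity
  have hftc : ∫ x in (0:ℝ)..1,
      ((u x ^ 3 - c * u x) * Real.sin (π * x) + π ^ 2 * (u x * Real.sin (π * x))) = 0 := by
    have hcos : Continuous fun x : ℝ => Real.cos (π * x) :=
      Real.continuous_cos.comp (continuous_const.mul continuous_id)
    have key := my_ftc (F := fun x => v x * Real.sin (π * x) - π * (u x * Real.cos (π * x)))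
      (f := fun x => (u x ^ 3 - c * u x) * Real.sin (π * x) + π ^ 2 * (u x * Real.sin (π * x)))
      zero_le_one
      ((hv.mul hsin.continuousOn).sub (((hu.mul hcos.continuousOn)).const_smul π |>.congr
        (fun x _ => by simp [smul_eq_mul])))
      ?_ ?_
    · rw [key]
      simp [h0, h1, Real.sin_pi, Real.sin_zero, Real.cos_zero]
    · apply ContinuousOn.add
      · exact (((hu.pow 3).sub (hu.const_smul c |>.congr (fun x _ => by simp [smul_eq_mul]))).mul
          hsin.continuousOn)
      · exact ((hu.mul hsin.continuousOn).const_smul (π^2)).congr (fun x _ => by simp [smul_eq_mul])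
    · intro x hx
      have hds : HasDerivAt (fun y => Real.sin (π * y)) (Real.cos (π * x) * π) x := by
        simpa using ((hasDerivAt_id x).const_mul π).sin
      have hdc : HasDerivAt (fun y => Real.cos (π * y)) (-Real.sin (π * x) * π) x := by
        simpa using ((hasDerivAt_id x).const_mul π).cos
      have hA : HasDerivAt (fun y => v y * Real.sin (π * y))
          ((u x ^ 3 - c * u x) * Real.sin (π * x) + v x * (Real.cos (π * x) * π)) x :=
        (hvd x hx).mul hds
      have hB : HasDerivAt (fun y => π * (u y * Real.cos (π * y)))
          (π * (v x * Real.cos (π * x) + u x * (-Real.sin (π * x) * π))) x :=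
        (((hud x hx).mul hdc)).const_mul π
      have := hA.fun_sub hB
      exact this.congr_deriv (by
      ring)
  -- monotone comparison
  have hmono : r * J ≤ π ^ 2 * J := by
    have hi1 : ∀ x ∈ Icc (0:ℝ) 1, r * (u x * Real.sin (π * x)) ≤
        (c * u x - u x ^ 3) * Real.sin (π * x) := by
      intro x hx
      have h2 := (hpt x hx).2
      have hge : r ≤ c - u x ^ 2 := by
        rw [h2]
        calc r = Real.sqrt (r ^ 2) := (Real.sqrt_sq hrpos.le).symm
          _ ≤ Real.sqrt (2 * v x ^ 2 + r ^ 2) := Real.sqrt_le_sqrt (by nlinarith [sq_nonneg (v x)])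
      have hsx : 0 ≤ Real.sin (π * x) := by
        rcases eq_or_lt_of_le hx.1 with h | h
        · simp [← h]
        rcases eq_or_lt_of_le hx.2 with h' | h'
        · rw [h']; simp [Real.sin_pi]
        · exact (Real.sin_pos_of_pos_of_lt_pi (mul_pos Real.pi_pos h)
            (by nlinarith [Real.pi_pos])).le
      have hux := hun x hx
      nlinarith [mul_nonneg (mul_nonneg hux hsx) (sub_nonneg.2 hge)]
    have hInt1 : IntervalIntegrable (fun x => r * (u x * Real.sin (π * x))) volume 0 1 :=
      (((hu.mul hsin.continuousOn).const_smul r).congr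
        (fun x _ => by simp [smul_eq_mul])).intervalIntegrable_of_Icc zero_le_one
    have hInt2 : IntervalIntegrable (fun x => (c * u x - u x ^ 3) * Real.sin (π * x)) volume 0 1 :=
      ((((hu.const_smul c).congr (fun x _ => by simp [smul_eq_mul])).sub (hu.pow 3)).mul
        hsin.continuousOn).intervalIntegrable_of_Icc zero_le_one
    have h3 := intervalIntegral.integral_mono_on zero_le_one hInt1 hInt2 hi1
    have h4 : ∫ x in (0:ℝ)..1, r * (u x * Real.sin (π * x)) = r * J := by
      rw [hJ, ← intervalIntegral.integral_const_mul]
    have h5 : ∫ x in (0:ℝ)..1, (c * u x - u x ^ 3) * Real.sin (π * x) = π ^ 2 * J := by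
      have : ∀ x, (c * u x - u x ^ 3) * Real.sin (π * x) =
          π ^ 2 * (u x * Real.sin (π * x)) -
          ((u x ^ 3 - c * u x) * Real.sin (π * x) + π ^ 2 * (u x * Real.sin (π * x))) := by
        intro x; ring
      have hIα : IntervalIntegrable (fun x => π ^ 2 * (u x * Real.sin (π * x))) volume 0 1 :=
        ((hu.mul hsin.continuousOn).const_smul (π^2) |>.congr
          (fun x _ => by simp [smul_eq_mul])).intervalIntegrable_of_Icc zero_le_one
      have hIβ : IntervalIntegrable (fun x =>
          (u x ^ 3 - c * u x) * Real.sin (π * x) + π ^ 2 * (u x * Real.sin (π * x)))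
          volume 0 1 := by
        apply ContinuousOn.intervalIntegrable_of_Icc zero_le_one
        apply ContinuousOn.add
        · exact ((hu.pow 3).sub (hu.const_smul c |>.congr (fun x _ => by simp [smul_eq_mul]))).mul
            hsin.continuousOn
        · exact (hu.mul hsin.continuousOn).const_smul (π^2) |>.congr
            (fun x _ => by simp [smul_eq_mul])
      rw [intervalIntegral.integral_congr (fun x _ => this x)]
      rw [intervalIntegral.integral_sub hIα hIβ, hftc, sub_zero, hJ,
        ← intervalIntegral.integral_const_mul]
    rw [h4, h5] at h3; exact h3
  nlinarith [hJpos]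
end core4

section core5
variable {u v : ℝ → ℝ} {c : ℝ}

lemma identities (hu : ContinuousOn u (Icc 0 1)) (hv : ContinuousOn v (Icc 0 1))
    (hud : ∀ x ∈ Ioo (0:ℝ) 1, HasDerivAt u (v x) x)
    (hvd : ∀ x ∈ Ioo (0:ℝ) 1, HasDerivAt v (u x ^ 3 - c * u x) x)
    (h0 : u 0 = 0) (h1 : u 1 = 0)
    {x₀ : ℝ} (hx₀ : x₀ ∈ Ioo (0:ℝ) 1) (hv0 : v x₀ = 0) :
    (∫ x in (0:ℝ)..1, v x ^ 2) + (∫ x in (0:ℝ)..1, u x ^ 4)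
        = c * ∫ x in (0:ℝ)..1, u x ^ 2 ∧
    (∫ x in (0:ℝ)..1, v x ^ 2)
        = (c ^ 2 - (c - u x₀ ^ 2) ^ 2) / 2 - c * (∫ x in (0:ℝ)..1, u x ^ 2)
          + (∫ x in (0:ℝ)..1, u x ^ 4) / 2 := by
  have cons := conservation hu hv hud hvd hx₀ hv0
  have hIu2 : IntervalIntegrable (fun x => u x ^ 2) volume 0 1 :=
    (hu.pow 2).intervalIntegrable_of_Icc zero_le_one
  have hIu4 : IntervalIntegrable (fun x => u x ^ 4) volume 0 1 :=
    (hu.pow 4).intervalIntegrable_of_Icc zero_le_one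
  have hIv2 : IntervalIntegrable (fun x => v x ^ 2) volume 0 1 :=
    (hv.pow 2).intervalIntegrable_of_Icc zero_le_one
  constructor
  · -- integration by parts : ∫ (v² + (u⁴ - c u²)) = 0
    have key := my_ftc (F := fun x => u x * v x)
      (f := fun x => v x ^ 2 + (u x ^ 4 - c * u x ^ 2)) zero_le_one (hu.mul hv) ?_ ?_
    · simp only [h0, h1, zero_mul, mul_zero, sub_zero] at key
      have hsplit : ∫ x in (0:ℝ)..1, (v x ^ 2 + (u x ^ 4 - c * u x ^ 2))
          = (∫ x in (0:ℝ)..1, v x ^ 2) + ((∫ x in (0:ℝ)..1, u x ^ 4)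
            - c * ∫ x in (0:ℝ)..1, u x ^ 2) := by
        rw [intervalIntegral.integral_add hIv2 (hIu4.sub (hIu2.const_mul c)),
          intervalIntegral.integral_sub hIu4 (hIu2.const_mul c),
          intervalIntegral.integral_const_mul]
      rw [hsplit] at key
      linarith
    · apply (hv.pow 2).add ((hu.pow 4).sub ((hu.pow 2).const_smul c |>.congr
        (fun x _ => by simp [smul_eq_mul])))
    · intro x hx
      have := (hud x hx).fun_mul (hvd x hx)
      exact this.congr_deriv (by
      ring)
  · -- pointwise conservation integrated
    have hcongr : ∫ x in (0:ℝ)..1, v x ^ 2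
        = ∫ x in (0:ℝ)..1, (((c - u x ^ 2) ^ 2 - (c - u x₀ ^ 2) ^ 2) / 2) := by
      apply intervalIntegral.integral_congr
      intro x hx
      rw [uIcc_of_le zero_le_one] at hx
      have := cons x hx
      simp only
      linarith
    rw [hcongr]
    have hexp : ∀ x, ((c - u x ^ 2) ^ 2 - (c - u x₀ ^ 2) ^ 2) / 2
        = (c ^ 2 - (c - u x₀ ^ 2) ^ 2) / 2 - c * u x ^ 2 + u x ^ 4 / 2 := by
      intro x; ring
    rw [intervalIntegral.integral_congr (fun x _ => hexp x)]
    rw [intervalIntegral.integral_add (by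
        apply IntervalIntegrable.sub _ (hIu2.const_mul c)
        exact intervalIntegrable_const) (hIu4.div_const 2)]
    rw [intervalIntegral.integral_sub intervalIntegrable_const (hIu2.const_mul c)]
    rw [intervalIntegral.integral_const_mul, intervalIntegral.integral_div,
      intervalIntegral.integral_const]
    simp
end core5

section core6
variable {u v : ℝ → ℝ} {c : ℝ}

lemma gbound (hu : ContinuousOn u (Icc 0 1)) (hv : ContinuousOn v (Icc 0 1))
    (hud : ∀ x ∈ Ioo (0:ℝ) 1, HasDerivAt u (v x) x)
    (hvd : ∀ x ∈ Ioo (0:ℝ) 1, HasDerivAt v (u x ^ 3 - c * u x) x)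
    (hpos : ∀ x ∈ Ioo (0:ℝ) 1, 0 < u x) (h0 : u 0 = 0) (h1 : u 1 = 0) (hc : 0 < c)
    {x₀ : ℝ} (hx₀ : x₀ ∈ Ioo (0:ℝ) 1) (hmax : IsMaxOn u (Icc 0 1) x₀) (hv0 : v x₀ = 0) :
    |(c - ∫ x in (0:ℝ)..1, u x ^ 2) - 2 * Real.sqrt 2 * u x₀| ≤ c - u x₀ ^ 2 := by
  obtain ⟨hrpos, hpt⟩ := qpos hu hv hud hvd hpos h0 h1 hc hx₀ hmax hv0
  have habs := intabs hu hv hud hvd hpos h0 h1 hc hx₀ hmax hv0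
  set M := u x₀ with hM
  set r := c - M ^ 2 with hr
  have hIu2 : IntervalIntegrable (fun x => u x ^ 2) volume 0 1 :=
    (hu.pow 2).intervalIntegrable_of_Icc zero_le_one
  have hIabs : IntervalIntegrable (fun x => |v x|) volume 0 1 :=
    hv.abs.intervalIntegrable_of_Icc zero_le_one
  have hIsq : IntervalIntegrable (fun x => Real.sqrt (2 * v x ^ 2 + r ^ 2)) volume 0 1 := by
    apply ContinuousOn.intervalIntegrable_of_Icc zero_le_one
    exact Real.continuous_sqrt.comp_continuousOn
      (((hv.pow 2).const_smul 2 |>.congr (fun x _ => by simp [smul_eq_mul])).add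
        continuousOn_const)
  have hgeq : c - (∫ x in (0:ℝ)..1, u x ^ 2)
      = ∫ x in (0:ℝ)..1, Real.sqrt (2 * v x ^ 2 + r ^ 2) := by
    have h1' : ∫ x in (0:ℝ)..1, (c - u x ^ 2) = c - ∫ x in (0:ℝ)..1, u x ^ 2 := by
      rw [intervalIntegral.integral_sub intervalIntegrable_const hIu2,
        intervalIntegral.integral_const]
      simp
    rw [← h1']
    apply intervalIntegral.integral_congr
    intro x hx
    rw [uIcc_of_le zero_le_one] at hx
    exact (hpt x hx).2
  -- pointwise bounds
  have hups : ∀ x ∈ Icc (0:ℝ) 1, Real.sqrt (2 * v x ^ 2 + r ^ 2)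
      ≤ Real.sqrt 2 * |v x| + r := by
    intro x hx
    have h2 : Real.sqrt (2 * v x ^ 2) = Real.sqrt 2 * |v x| := by
      rw [Real.sqrt_mul (by norm_num : (0:ℝ) ≤ 2), Real.sqrt_sq_eq_abs]
    calc Real.sqrt (2 * v x ^ 2 + r ^ 2)
        ≤ Real.sqrt (2 * v x ^ 2) + Real.sqrt (r ^ 2) :=
          sqrt_add_le' (by positivity) (sq_nonneg r)
      _ = Real.sqrt 2 * |v x| + r := by rw [h2, Real.sqrt_sq hrpos.le]
  have hlos : ∀ x ∈ Icc (0:ℝ) 1, Real.sqrt 2 * |v x|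
      ≤ Real.sqrt (2 * v x ^ 2 + r ^ 2) := by
    intro x hx
    have h2 : Real.sqrt (2 * v x ^ 2) = Real.sqrt 2 * |v x| := by
      rw [Real.sqrt_mul (by norm_num : (0:ℝ) ≤ 2), Real.sqrt_sq_eq_abs]
    rw [← h2]
    exact Real.sqrt_le_sqrt (by nlinarith [sq_nonneg r])
  -- integrate
  have hup : ∫ x in (0:ℝ)..1, Real.sqrt (2 * v x ^ 2 + r ^ 2)
      ≤ Real.sqrt 2 * (2 * M) + r := by
    have := intervalIntegral.integral_mono_on zero_le_one hIsq
      (((hIabs.const_mul (Real.sqrt 2))).add intervalIntegrable_const) hups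
    calc ∫ x in (0:ℝ)..1, Real.sqrt (2 * v x ^ 2 + r ^ 2)
        ≤ ∫ x in (0:ℝ)..1, (Real.sqrt 2 * |v x| + r) := this
      _ = Real.sqrt 2 * (∫ x in (0:ℝ)..1, |v x|) + r := by
          rw [intervalIntegral.integral_add (hIabs.const_mul (Real.sqrt 2))
            intervalIntegrable_const, intervalIntegral.integral_const_mul,
            intervalIntegral.integral_const]
          simp
      _ = Real.sqrt 2 * (2 * M) + r := by rw [habs]
  have hlo : Real.sqrt 2 * (2 * M) ≤ ∫ x in (0:ℝ)..1, Real.sqrt (2 * v x ^ 2 + r ^ 2) := by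
    have := intervalIntegral.integral_mono_on zero_le_one
      (hIabs.const_mul (Real.sqrt 2)) hIsq hlos
    calc Real.sqrt 2 * (2 * M) = Real.sqrt 2 * ∫ x in (0:ℝ)..1, |v x| := by rw [habs]
      _ = ∫ x in (0:ℝ)..1, Real.sqrt 2 * |v x| := by
          rw [intervalIntegral.integral_const_mul]
      _ ≤ _ := this
  rw [hgeq]
  rw [abs_le]
  constructor <;> nlinarith [hup, hlo]
end core6


-- pure arithmetic helper lemmas (small contexts for nlinarith)
private lemma sqrt2_facts : Real.sqrt 2 ^ 2 = 2 ∧ 1.4 ≤ Real.sqrt 2 ∧ Real.sqrt 2 ≤ 1.5 := by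
  have h : Real.sqrt 2 ^ 2 = 2 := Real.sq_sqrt (by norm_num)
  have hnn : 0 ≤ Real.sqrt 2 := Real.sqrt_nonneg 2
  refine ⟨h, by nlinarith, by nlinarith⟩

private lemma pi_sq_le : π ^ 2 ≤ 10 := by
  have h1 : π ≤ 3.15 := by linarith [Real.pi_lt_d2]
  nlinarith [Real.pi_pos]

private lemma arith_c {c ξ : ℝ} (hξ : 10 ≤ ξ) (h : ξ ^ 4 ≤ c * ξ ^ 2) : ξ ^ 2 ≤ c := by
  nlinarith [pow_pos (show (0:ℝ) < ξ by linarith) 2]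

private lemma arith_Mub {M ξ s2 : ℝ} (hξ : 10 ≤ ξ) (hMnn : 0 ≤ M) (hs2nn : 0 ≤ s2)
    (hs2ub : s2 ≤ 1.5) (h : M ^ 2 ≤ ξ ^ 2 + 2 * s2 * M + 10) : M ≤ ξ + 3 := by
  have h2 : 2 * s2 * M ≤ 3 * M := by nlinarith
  nlinarith [sq_nonneg (M - ξ - 3)]

private lemma arith_Mlb {M ξ : ℝ} (hξ : 10 ≤ ξ) (hMnn : 0 ≤ M)
    (h : ξ ^ 2 - 10 ≤ M ^ 2) : ξ - 1 ≤ M := by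
  nlinarith [sq_nonneg (M - ξ + 1)]

private lemma arith_gb2 {g M ξ s2 r : ℝ} (h1 : |g - 2 * s2 * M| ≤ r) (hr10 : r ≤ 10)
    (hMub : M ≤ ξ + 3) (hMlb : ξ - 1 ≤ M) (hs2nn : 0 ≤ s2) (hs2ub : s2 ≤ 1.5) :
    |g - 2 * s2 * ξ| ≤ 19 := by
  obtain ⟨ha, hb⟩ := abs_le.1 h1
  have hub : 2 * s2 * (M - ξ) ≤ 9 := by nlinarith
  have hlb : -9 ≤ 2 * s2 * (M - ξ) := by nlinarith
  rw [abs_le]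
  constructor <;> nlinarith

private lemma arith_A {ξ g r s2 : ℝ} (hξ : 10 ≤ ξ) (hgnn : 0 ≤ g) (hrpos : 0 < r)
    (hr10 : r ≤ 10) (hs2lb : 1.4 ≤ s2) (hs2ub : s2 ≤ 1.5)
    (hgb : |g - 2 * s2 * ξ| ≤ 19) :
    |(2 / 3 * ξ ^ 2 * g - g ^ 2 / 3 + r ^ 2 / 3) - (4 * s2 / 3) * ξ ^ 3| ≤ 25 * ξ ^ 2 := by
  obtain ⟨ha, hb⟩ := abs_le.1 hgb
  have hξ2 : 100 ≤ ξ ^ 2 := by nlinarith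
  have hg49 : g ≤ 4.9 * ξ := by nlinarith
  have hg2 : g ^ 2 ≤ 24.01 * ξ ^ 2 := by nlinarith
  have hr2 : r ^ 2 ≤ 100 := by nlinarith
  have k1 : ξ ^ 2 * (g - 2 * s2 * ξ) ≤ ξ ^ 2 * 19 :=
    mul_le_mul_of_nonneg_left hb (by positivity)
  have k2 : ξ ^ 2 * (-19) ≤ ξ ^ 2 * (g - 2 * s2 * ξ) :=
    mul_le_mul_of_nonneg_left ha (by positivity)
  have key : (2 / 3 * ξ ^ 2 * g - g ^ 2 / 3 + r ^ 2 / 3) - (4 * s2 / 3) * ξ ^ 3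
      = 2 / 3 * (ξ ^ 2 * (g - 2 * s2 * ξ)) - g ^ 2 / 3 + r ^ 2 / 3 := by ring
  rw [abs_le, key]
  constructor <;> nlinarith [sq_nonneg g]

private lemma arith_T {A B T ξ : ℝ} (hξ : 10 ≤ ξ) (hAS : ξ ^ 4 ≤ A) (hBnn : 0 ≤ B)
    (hT2 : T ^ 2 = A ^ 2 + 4 * B) (hTnn : 0 ≤ T) (hBub : B ≤ 3 * ξ ^ 3) :
    A ≤ T ∧ T - A ≤ 2 := by
  have hξ4 : (0:ℝ) < ξ ^ 4 := by positivity
  have hApos : 0 < A := by linarith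
  have hTlb : A ≤ T := by nlinarith
  refine ⟨hTlb, ?_⟩
  have hTub : T ≤ A + 2 * B / A := by
    have hexp : (A + 2 * B / A) ^ 2 = A ^ 2 + 4 * B + 4 * (B / A) ^ 2 := by
      field_simp; ring
    have h2 : A ^ 2 + 4 * B ≤ (A + 2 * B / A) ^ 2 := by
      rw [hexp]; nlinarith [sq_nonneg (B / A)]
    calc T = Real.sqrt (T ^ 2) := (Real.sqrt_sq hTnn).symm
      _ ≤ Real.sqrt ((A + 2 * B / A) ^ 2) := Real.sqrt_le_sqrt (by linarith)
      _ = A + 2 * B / A := Real.sqrt_sq (by positivity)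
  have hBA : B / A ≤ 1 := by
    rw [div_le_one hApos]
    nlinarith
  have : 2 * B / A ≤ 2 := by
    rw [mul_div_assoc]; linarith
  linarith

private lemma arith_Bub {B c g r ξ s2 : ℝ} (hξ : 10 ≤ ξ) (hgnn : 0 ≤ g) (hcnn : 0 ≤ c)
    (hs2lb : 1.4 ≤ s2) (hs2ub : s2 ≤ 1.5) (hrpos : 0 < r)
    (hBval : B = (c * g - r ^ 2) / 3) (hcub : c ≤ ξ ^ 2 + 2 * s2 * ξ + 19)
    (hgub : g ≤ 2 * s2 * ξ + 19) : B ≤ 3 * ξ ^ 3 := by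
  have hc15 : c ≤ 1.5 * ξ ^ 2 := by nlinarith
  have hg49 : g ≤ 4.9 * ξ := by nlinarith
  have hcg : c * g ≤ 1.5 * ξ ^ 2 * (4.9 * ξ) :=
    mul_le_mul hc15 hg49 hgnn (by positivity)
  nlinarith

set_option maxHeartbeats 1000000 in
lemma master {u v : ℝ → ℝ} {c ξ : ℝ}
    (hu : ContinuousOn u (Icc 0 1)) (hv : ContinuousOn v (Icc 0 1))
    (hud : ∀ x ∈ Ioo (0:ℝ) 1, HasDerivAt u (v x) x)
    (hvd : ∀ x ∈ Ioo (0:ℝ) 1, HasDerivAt v (u x ^ 3 - c * u x) x)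
    (hpos : ∀ x ∈ Ioo (0:ℝ) 1, 0 < u x) (h0 : u 0 = 0) (h1 : u 1 = 0) (hc : 0 < c)
    (hnorm : (∫ x in (0:ℝ)..1, u x ^ 2) = ξ ^ 2) (hξ : 10 ≤ ξ) :
    |((∫ x in (0:ℝ)..1, u x ^ 4) +
        Real.sqrt ((∫ x in (0:ℝ)..1, u x ^ 4) ^ 2 + 4 * ∫ x in (0:ℝ)..1, v x ^ 2)) / 2
      - ξ ^ 4 - (4 * Real.sqrt 2 / 3) * ξ ^ 3| ≤ 30 * ξ ^ 2 := by
  obtain ⟨x₀, hx₀, hmax, hv0, hMgt⟩ := maxpt hu hud hpos h0 h1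
  obtain ⟨hrpos, hpt⟩ := qpos hu hv hud hvd hpos h0 h1 hc hx₀ hmax hv0
  have hre := eigen_bound hu hv hud hvd hpos h0 h1 hc hx₀ hmax hv0
  obtain ⟨id1, id2⟩ := identities hu hv hud hvd h0 h1 hx₀ hv0
  have hgb := gbound hu hv hud hvd hpos h0 h1 hc hx₀ hmax hv0
  set M := u x₀ with hM
  set r := c - M ^ 2 with hr
  set A := ∫ x in (0:ℝ)..1, u x ^ 4 with hA
  set B := ∫ x in (0:ℝ)..1, v x ^ 2 with hB
  rw [hnorm] at id1 id2 hgb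
  set g := c - ξ ^ 2 with hg
  obtain ⟨hs2, hs2lb, hs2ub⟩ := sqrt2_facts
  have hs2nn : 0 ≤ Real.sqrt 2 := Real.sqrt_nonneg 2
  have hξpos : (0:ℝ) < ξ := by linarith
  have hr10 : r ≤ 10 := le_trans hre pi_sq_le
  have hBnn : 0 ≤ B := by
    rw [hB]
    apply intervalIntegral.integral_nonneg zero_le_one
    intro x _; positivity
  have hAS : ξ ^ 4 ≤ A := by
    have hIu2 : IntervalIntegrable (fun x => u x ^ 2) volume 0 1 :=
      (hu.pow 2).intervalIntegrable_of_Icc zero_le_one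
    have hIu4 : IntervalIntegrable (fun x => u x ^ 4) volume 0 1 :=
      (hu.pow 4).intervalIntegrable_of_Icc zero_le_one
    have hnn : (0:ℝ) ≤ ∫ x in (0:ℝ)..1, (u x ^ 2 - ξ ^ 2) ^ 2 := by
      apply intervalIntegral.integral_nonneg zero_le_one
      intro x _; positivity
    have hexp : ∫ x in (0:ℝ)..1, (u x ^ 2 - ξ ^ 2) ^ 2
        = A - 2 * ξ ^ 2 * ξ ^ 2 + ξ ^ 4 := by
      have h' : ∀ x, (u x ^ 2 - ξ ^ 2) ^ 2
          = u x ^ 4 - 2 * ξ ^ 2 * u x ^ 2 + ξ ^ 4 := fun x => by ring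
      rw [intervalIntegral.integral_congr (fun x _ => h' x)]
      rw [intervalIntegral.integral_add (hIu4.sub (hIu2.const_mul (2 * ξ ^ 2)))
          intervalIntegrable_const,
        intervalIntegral.integral_sub hIu4 (hIu2.const_mul (2 * ξ ^ 2)),
        intervalIntegral.integral_const_mul, intervalIntegral.integral_const, hnorm]
      simp [hA]
    rw [hexp] at hnn
    have h4 : 2 * ξ ^ 2 * ξ ^ 2 = 2 * ξ ^ 4 := by ring
    linarith
  have hBval : B = (c * g - r ^ 2) / 3 := by
    rw [hg, hr]
    linear_combination (2/3) * id2 + (1/3) * id1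
  have hAval : A = c * ξ ^ 2 - B := by linarith
  have hcξ : ξ ^ 2 ≤ c := arith_c hξ (by linarith)
  have hgnn : 0 ≤ g := by rw [hg]; linarith
  have hMnn : 0 ≤ M := hMgt.le
  have hgb' := abs_le.1 hgb
  have hgub' : g ≤ 2 * Real.sqrt 2 * M + r := by rw [hg]; linarith [hgb'.2]
  have hM2 : M ^ 2 = c - r := by rw [hr]; ring
  have hMub : M ≤ ξ + 3 := by
    apply arith_Mub hξ hMnn hs2nn hs2ub
    rw [hM2]
    have hcg : c ≤ ξ ^ 2 + g := by rw [hg]; linarith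
    linarith [hrpos, hgub', hr10]
  have hMlb : ξ - 1 ≤ M := by
    apply arith_Mlb hξ hMnn
    rw [hM2]
    linarith
  have hgb2 : |(c - ξ ^ 2) - 2 * Real.sqrt 2 * ξ| ≤ 19 :=
    arith_gb2 hgb hr10 hMub hMlb hs2nn hs2ub
  rw [← hg] at hgb2
  have hgub : g ≤ 2 * Real.sqrt 2 * ξ + 19 := by linarith [(abs_le.1 hgb2).2]
  have hAexp : A - ξ ^ 4 = 2 / 3 * ξ ^ 2 * g - g ^ 2 / 3 + r ^ 2 / 3 := by
    rw [hAval, hBval, hg]; ring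
  have hAbnd : |A - ξ ^ 4 - (4 * Real.sqrt 2 / 3) * ξ ^ 3| ≤ 25 * ξ ^ 2 := by
    rw [hAexp]
    exact arith_A hξ hgnn hrpos hr10 hs2lb hs2ub hgb2
  set T := Real.sqrt (A ^ 2 + 4 * B) with hT
  have hT2 : T ^ 2 = A ^ 2 + 4 * B := Real.sq_sqrt (by positivity)
  have hTnn : 0 ≤ T := Real.sqrt_nonneg _
  have hBub : B ≤ 3 * ξ ^ 3 :=
    arith_Bub hξ hgnn hc.le hs2lb hs2ub hrpos hBval (by rw [hg] at hgub; linarith) hgub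
  obtain ⟨hTlb, hTA⟩ := arith_T hξ hAS hBnn hT2 hTnn hBub
  have hfinal : (A + T) / 2 - ξ ^ 4 - (4 * Real.sqrt 2 / 3) * ξ ^ 3
      = (A - ξ ^ 4 - (4 * Real.sqrt 2 / 3) * ξ ^ 3) + (T - A) / 2 := by ring
  rw [hfinal]
  have h1' := abs_le.1 hAbnd
  have hξ2 : 100 ≤ ξ ^ 2 := by
    have h10 : (10:ℝ) * 10 ≤ ξ * ξ := mul_le_mul hξ hξ (by norm_num) (by linarith)
    have : ξ * ξ = ξ ^ 2 := by ring
    linarith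
  rw [abs_le]
  constructor <;> linarith [h1'.1, h1'.2]

lemma extract {u : ℝ → ℝ} {c : ℝ} (hs : IsLocalSol 3 u c) :
    ∃ v : ℝ → ℝ, ContinuousOn v (Icc 0 1) ∧
      (∀ x ∈ Ioo (0:ℝ) 1, HasDerivAt u (v x) x) ∧
      (∀ x ∈ Ioo (0:ℝ) 1, HasDerivAt v (u x ^ 3 - c * u x) x) ∧
      (∀ x ∈ Ioo (0:ℝ) 1, v x = deriv u x) := by
  obtain ⟨hreg, hpos, h0, h1, hode⟩ := hs
  have huniq : UniqueDiffOn ℝ (Icc (0:ℝ) 1) := uniqueDiffOn_Icc one_pos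
  refine ⟨derivWithin u (Icc 0 1), hreg.continuousOn_derivWithin huniq (by norm_num), ?_, ?_, ?_⟩
  · intro x hx
    have hnx : Icc (0:ℝ) 1 ∈ nhds x := Icc_mem_nhds hx.1 hx.2
    have hca : ContDiffAt ℝ 2 u x := hreg.contDiffAt hnx
    have hdx : DifferentiableAt ℝ u x := hca.differentiableAt (by norm_num)
    rw [derivWithin_of_mem_nhds hnx]
    exact hdx.hasDerivAt
  · intro x hx
    have hnx : Icc (0:ℝ) 1 ∈ nhds x := Icc_mem_nhds hx.1 hx.2
    have hca : ContDiffAt ℝ 2 u x := hreg.contDiffAt hnx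
    obtain ⟨s, hs, hcs⟩ := hca.contDiffOn (le_refl 2) (by norm_num)
    obtain ⟨t, hts, hto, hxt⟩ := mem_nhds_iff.1 hs
    have hct : ContDiffOn ℝ 2 u t := hcs.mono hts
    have hdd : DifferentiableOn ℝ (deriv u) t :=
      (hct.deriv_of_isOpen hto (show (1:WithTop ℕ∞) + 1 ≤ 2 by norm_num)).differentiableOn one_ne_zero
    have hda : DifferentiableAt ℝ (deriv u) x :=
      (hdd x hxt).differentiableAt (hto.mem_nhds hxt)
    have heq : deriv (deriv u) x = u x ^ 3 - c * u x := by
      have := hode x hx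
      have h3 : (u x) ^ (3:ℝ) = u x ^ (3:ℕ) := by
        rw [show ((3:ℝ)) = ((3:ℕ):ℝ) by norm_num, Real.rpow_natCast]
      rw [h3] at this; linarith
    have h1 : HasDerivAt (deriv u) (u x ^ 3 - c * u x) x := heq ▸ hda.hasDerivAt
    apply h1.congr_of_eventuallyEq
    filter_upwards [Ioo_mem_nhds hx.1 hx.2] with y hy
    have hny : Icc (0:ℝ) 1 ∈ nhds y := Icc_mem_nhds hy.1 hy.2
    exact (derivWithin_of_mem_nhds hny)
  · intro x hx
    have hnx : Icc (0:ℝ) 1 ∈ nhds x := Icc_mem_nhds hx.1 hx.2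
    exact derivWithin_of_mem_nhds hnx

lemma C1three_eq : C1three = 2 * Real.sqrt 2 := by
  have hpt : ∀ s ∈ uIcc (0:ℝ) 1, Real.sqrt (1/2 - s^2 + s^4/2)
      = Real.sqrt 2 / 2 * (1 - s^2) := by
    intro s hs
    rw [uIcc_of_le zero_le_one] at hs
    have h1 : (1:ℝ)/2 - s^2 + s^4/2 = (Real.sqrt 2 / 2 * (1 - s^2))^2 := by
      have : (Real.sqrt 2)^2 = 2 := Real.sq_sqrt (by norm_num)
      nlinarith [this]
    rw [h1, Real.sqrt_sq]
    have : 0 ≤ 1 - s^2 := by nlinarith [hs.1, hs.2]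
    positivity
  have hint : ∫ s in (0:ℝ)..1, Real.sqrt (1/2 - s^2 + s^4/2)
      = Real.sqrt 2 / 2 * (1 - 1/3) := by
    rw [intervalIntegral.integral_congr hpt, intervalIntegral.integral_const_mul]
    congr 1
    rw [intervalIntegral.integral_sub intervalIntegrable_const
      ((continuous_pow 2).continuousOn.intervalIntegrable_of_Icc zero_le_one),
      integral_pow, intervalIntegral.integral_const]
    norm_num
  rw [C1three, hint]
  ring


end helpers

theorem stmt16 (w : ℝ → ℝ → ℝ) (γ : ℝ → ℝ)
    (hsol : ∀ ξ > (0:ℝ), 0 < γ ξ ∧ IsLocalSol 3 (w ξ) (γ ξ) ∧ l2norm (w ξ) = ξ)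
    (h : ℝ → ℝ)
    (hh : ∀ ξ > (0:ℝ), 0 < h ξ ∧
      (h ξ)^2 = (pNorm 3 (w ξ) + Real.sqrt ((pNorm 3 (w ξ))^2 + 4 * gradSq (w ξ))) / 2) :
    (fun ξ => (h ξ)^2 - ξ^4 - (2/3) * C1three * ξ^3)
      =o[atTop] (fun ξ : ℝ => ξ^3) := by
  have hev : ∀ᶠ ξ in atTop, ‖(h ξ)^2 - ξ^4 - (2/3) * C1three * ξ^3‖ ≤ 30 * ‖(ξ:ℝ)^2‖ := by
    filter_upwards [eventually_ge_atTop (10:ℝ)] with ξ hξ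
    have hξ0 : (0:ℝ) < ξ := by linarith
    obtain ⟨hc, hls, hnorm⟩ := hsol ξ hξ0
    obtain ⟨hh1, hh2⟩ := hh ξ hξ0
    set u := w ξ with hu'
    obtain ⟨v, hv, hud, hvd, hveq⟩ := extract hls
    obtain ⟨hreg, hpos, h0, h1, _⟩ := hls
    have hucont : ContinuousOn u (Icc 0 1) := hreg.continuousOn
    -- pNorm is ∫ u⁴
    have hpN : pNorm 3 u = ∫ x in (0:ℝ)..1, u x ^ 4 := by
      unfold pNorm
      apply intervalIntegral.integral_congr
      intro x _
      show u x ^ ((3:ℝ)+1) = u x ^ (4:ℕ)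
      have h4 : ((3:ℝ) + 1) = ((4:ℕ):ℝ) := by norm_num
      rw [h4, Real.rpow_natCast]
    -- gradSq is ∫ v²
    have hae1 : ∀ᵐ x : ℝ, x ≠ (1:ℝ) := by
      have hset : {x : ℝ | ¬ x ≠ (1:ℝ)} = {(1:ℝ)} := by ext t; simp
      rw [MeasureTheory.ae_iff, hset]
      exact Real.volume_singleton
    have hgS : gradSq u = ∫ x in (0:ℝ)..1, v x ^ 2 := by
      unfold gradSq
      apply intervalIntegral.integral_congr_ae
      filter_upwards [hae1] with x hx hmem
      rw [Set.uIoc_of_le zero_le_one] at hmem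
      rw [hveq x ⟨hmem.1, lt_of_le_of_ne hmem.2 hx⟩]
    -- l2 norm
    have hnn : (0:ℝ) ≤ ∫ x in (0:ℝ)..1, u x ^ 2 :=
      intervalIntegral.integral_nonneg zero_le_one (fun x _ => sq_nonneg _)
    have hnorm2 : (∫ x in (0:ℝ)..1, u x ^ 2) = ξ ^ 2 := by
      have := hnorm
      unfold l2norm at this
      have h2 : ((∫ x in (0:ℝ)..1, u x ^ 2) ^ ((1:ℝ)/2)) ^ (2:ℕ) = ξ ^ (2:ℕ) := by
        rw [this]
      rwa [← Real.rpow_natCast ((∫ x in (0:ℝ)..1, u x ^ 2) ^ ((1:ℝ)/2)) 2,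
        ← Real.rpow_mul hnn, show (1:ℝ)/2 * (2:ℕ) = 1 by norm_num,
        Real.rpow_one] at h2
    have hKey := master hucont hv hud hvd hpos h0 h1 hc hnorm2 hξ
    rw [← hpN, ← hgS] at hKey
    have hC1 : (2:ℝ)/3 * C1three = 4 * Real.sqrt 2 / 3 := by
      rw [C1three_eq]; ring
    rw [hh2, Real.norm_eq_abs, Real.norm_eq_abs, hC1]
    have habs2 : |ξ ^ 2| = ξ ^ 2 := abs_of_nonneg (by positivity)
    rw [habs2]
    exact hKey
  have hBigO : (fun ξ => (h ξ)^2 - ξ^4 - (2/3) * C1three * ξ^3)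
      =O[atTop] (fun ξ : ℝ => ξ^2) := by
    rw [Asymptotics.isBigO_iff]
    exact ⟨30, hev⟩
  exact hBigO.trans_isLittleO (Asymptotics.isLittleO_pow_pow_atTop_of_lt (by norm_num))
end
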